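/- Let r = 2 and let u_1 be a fixed user (the first leader). For every T ⊆ {1,...,K} with |T| = t+1 and u_1 ∉ T, the identity C_{T,{d_{u_1}}} = ⊕_{k∈T} C_{(T∪{u_1})\{k}, {d_k}} holds; equivalently, in the formal XOR C_{T,{d_{u_1}}} ⊕ ⊕_{k∈T} C_{(T∪{u_1})\{k}, {d_k}}, every sub-block W_{S,V} appears an even number of times, so the sum is 0 in the GF(2)-vector space with basis indexed by the pairs (S,V). -/
import Mathlib


open Finset

/-- The ambient GF(2)-vector space with basis indexed by sub-block labels `(S, V)`:
`S` is the block index (a set of files) and `V` the set of users caching the sub-block. -/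
abbrev Vec (N K : ℕ) := Finset (Fin N) × Finset (Fin K) → ZMod 2

/-- The basis vector corresponding to the sub-block `W_{S,V}`. -/
def subBlk (N K : ℕ) (S : Finset (Fin N)) (V : Finset (Fin K)) : Vec N K :=
  Pi.single (S, V) 1

/-- Number of distinct entries `N_e(d)` of a demand vector. -/
def numDistinct {N K : ℕ} (d : Fin K → Fin N) : ℕ := (Finset.univ.image d).card

/-- The demands `{d_{u_1},…,d_{u_j}}` of the first `j` leaders. -/
def leaderDems {N K : ℕ} (d : Fin K → Fin N) (u : ℕ → Fin K) (j : ℕ) : Finset (Fin N) :=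
  (Finset.Icc 1 j).image (fun i => d (u i))

/-- The group `G^j_{J,B}` of blocks: blocks `S` of size `r` intersecting the demands of `J`,
containing at most one of the first `j` leader demands (i.e. containing no 2-subset of
them), and with `S \ d(J) = B`. -/
def groupG {N K : ℕ} (d : Fin K → Fin N) (u : ℕ → Fin K) (r j : ℕ)
    (J : Finset (Fin K)) (B : Finset (Fin N)) : Finset (Finset (Fin N)) :=
  (Finset.powersetCard r (Finset.univ : Finset (Fin N))).filter (fun S =>
    (S ∩ J.image d).Nonempty ∧ (S ∩ leaderDems d u j).card ≤ 1 ∧ S \ J.image d = B)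

/-- The multicast term `⊕_{k∈J : d_k∈S} W_{S,J\{k}}` of a block `S` for the user set `J`. -/
def blkTerm {N K : ℕ} (d : Fin K → Fin N) (J : Finset (Fin K)) (S : Finset (Fin N)) : Vec N K :=
  ∑ k ∈ J.filter (fun k => d k ∈ S), subBlk N K S (J.erase k)

/-- The transmitted linear combination of the group `G^j_{J,B}` whose pilot block
(one of the first `n^j_{J,B}` blocks, demanded by the leader `u_j`) is `P`: the `p`-th
coordinate of the vector of linear combinations in the scheme, where `S_p = P`. -/
def comb {N K : ℕ} (d : Fin K → Fin N) (u : ℕ → Fin K) (r j : ℕ)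
    (J : Finset (Fin K)) (B : Finset (Fin N)) (P : Finset (Fin N)) : Vec N K :=
  blkTerm d J P +
    ∑ S ∈ (groupG d u r j J B).filter (fun S => d (u j) ∉ S ∧ (S ∩ P).card = r - 1),
      blkTerm d J S

/-- `Sum(G^j_{J,B})`: the XOR of all linear combinations transmitted for the group
`G^j_{J,B}` (one per block of the group demanded by the leader `u_j`). -/
def sumG {N K : ℕ} (d : Fin K → Fin N) (u : ℕ → Fin K) (r j : ℕ)
    (J : Finset (Fin K)) (B : Finset (Fin N)) : Vec N K :=
  ∑ P ∈ (groupG d u r j J B).filter (fun S => d (u j) ∈ S), comb d u r j J B P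

/-- The set of all linear combinations transmitted by the interference-alignment scheme
during steps `1,…,jmax`. -/
def transmitted {N K : ℕ} (d : Fin K → Fin N) (u : ℕ → Fin K) (r t jmax : ℕ) :
    Set (Vec N K) :=
  { v | ∃ j ∈ Finset.Icc 1 jmax, ∃ J : Finset (Fin K),
      J.card = t + 1 ∧ u j ∈ J ∧ (∀ i ∈ Finset.Icc 1 (j - 1), u i ∉ J) ∧
      ∃ B : Finset (Fin N), ∃ P ∈ groupG d u r j J B,
        d (u j) ∈ P ∧ v = comb d u r j J B P }

/-- The sub-blocks cached by user `k` under the MAN placement with parameter `t`. -/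
def cacheSet (N K r t : ℕ) (k : Fin K) : Set (Vec N K) :=
  { v | ∃ S : Finset (Fin N), ∃ V : Finset (Fin K),
      S.card = r ∧ V.card = t ∧ k ∈ V ∧ v = subBlk N K S V }

/-- A linear combination `c` contains no interference to a user demanding file `dk`,
relative to a set `Dec` of already known sub-blocks: every sub-block appearing in `c`
either belongs to the demanded file or is already known (hence cancellable). -/
def interfFree {N K : ℕ} (dk : Fin N) (Dec : Set (Vec N K)) (c : Vec N K) : Prop :=
  ∀ S V, c (S, V) ≠ 0 → dk ∈ S ∨ subBlk N K S V ∈ Dec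

/-- One round of direct decoding: add every sub-block lying in the span of the known
sub-blocks together with the interference-free transmitted combinations. -/
def ddStep {N K : ℕ} (dk : Fin N) (T : Set (Vec N K)) (Dec : Set (Vec N K)) :
    Set (Vec N K) :=
  Dec ∪ { v | (∃ S V, v = subBlk N K S V) ∧
    v ∈ Submodule.span (ZMod 2) (Dec ∪ { c ∈ T | interfFree dk Dec c }) }

/-- The set of sub-blocks that user `k` can obtain by direct decoding (treating
interference as noise) from its cache and the transmissions of steps `1,…,jmax`. -/
def directDec {N K : ℕ} (d : Fin K → Fin N) (u : ℕ → Fin K) (r t : ℕ)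
    (k : Fin K) (jmax : ℕ) : Set (Vec N K) :=
  ⋃ m : ℕ, (ddStep (d k) (transmitted d u r t jmax))^[m] (cacheSet N K r t k)

/-- The combination `C_{T,H}` from the interference-alignment analysis. -/
def Cth {N K : ℕ} (d : Fin K → Fin N) (r : ℕ) (T : Finset (Fin K)) (H : Finset (Fin N)) :
    Vec N K :=
  ∑ k1 ∈ T, ∑ S' ∈ (Finset.powersetCard r (T.image d ∪ H)).filter
      (fun S' => H ⊆ S' ∧ d k1 ∈ S'), subBlk N K S' (T.erase k1)

theorem statement12 (N K t : ℕ) (hN : 1 ≤ N) (hK : 1 ≤ K) (ht : t ≤ K - 1)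
    (d : Fin K → Fin N) (u1 : Fin K)
    (T : Finset (Fin K)) (hT : T.card = t + 1) (hu1 : u1 ∉ T) :
    Cth d 2 T {d u1} = ∑ k ∈ T, Cth d 2 ((insert u1 T).erase k) {d k} := by
  classical
  set A : Finset (Fin K) := insert u1 T with hA
  set D : Finset (Fin N) := A.image d with hD
  set g : Fin K → Fin K → Vec N K := fun a b =>
    ∑ S' ∈ (Finset.powersetCard 2 D).filter (fun S' => d a ∈ S' ∧ d b ∈ S'),
      subBlk N K S' ((A.erase a).erase b) with hg
  have hsymm : ∀ a b, g a b = g b a := by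
    intro a b
    simp only [hg]
    rw [Finset.erase_right_comm]
    apply Finset.sum_congr _ (fun _ _ => rfl)
    apply Finset.filter_congr
    intro S' _
    simp [and_comm]
  have hadd : ∀ v : Vec N K, v + v = 0 := by
    intro v
    funext x
    exact CharTwo.add_self_eq_zero (v x)
  have hL : Cth d 2 T {d u1} = ∑ k1 ∈ T, g u1 k1 := by
    unfold Cth
    apply Finset.sum_congr rfl
    intro k1 _
    have h1 : T.image d ∪ {d u1} = D := by
      rw [hD, hA, Finset.image_insert, Finset.insert_eq, Finset.union_comm]
    have h2 : T.erase k1 = (A.erase u1).erase k1 := by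
      rw [hA, Finset.erase_insert hu1]
    rw [h1, h2]
    apply Finset.sum_congr _ (fun _ _ => rfl)
    apply Finset.filter_congr
    intro S' _
    simp [Finset.singleton_subset_iff]
  have hR : ∀ k ∈ T, Cth d 2 (A.erase k) {d k} = ∑ k1 ∈ A.erase k, g k k1 := by
    intro k hk
    unfold Cth
    apply Finset.sum_congr rfl
    intro k1 _
    have hkA : k ∈ A := Finset.mem_insert_of_mem hk
    have h1 : (A.erase k).image d ∪ {d k} = D := by
      rw [Finset.union_comm, ← Finset.insert_eq, ← Finset.image_insert,
        Finset.insert_erase hkA]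
    rw [h1]
    apply Finset.sum_congr _ (fun _ _ => rfl)
    apply Finset.filter_congr
    intro S' _
    simp [Finset.singleton_subset_iff, and_comm]
  rw [hL, Finset.sum_congr rfl hR]
  have hsplit : ∀ k ∈ T, ∑ k1 ∈ A.erase k, g k k1
      = g k u1 + ∑ k1 ∈ T.erase k, g k k1 := by
    intro k hk
    have hne : u1 ≠ k := fun h => hu1 (h ▸ hk)
    have h1 : A.erase k = insert u1 (T.erase k) := by
      rw [hA, Finset.erase_insert_of_ne hne]
    rw [h1, Finset.sum_insert (fun h => hu1 (Finset.mem_of_mem_erase h))]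
  rw [Finset.sum_congr rfl hsplit, Finset.sum_add_distrib]
  have hzero : ∑ k ∈ T, ∑ k1 ∈ T.erase k, g k k1 = 0 := by
    have hrw : ∑ k ∈ T, ∑ k1 ∈ T.erase k, g k k1
        = ∑ p ∈ (T ×ˢ T).filter (fun p => p.2 ≠ p.1), g p.1 p.2 := by
      rw [Finset.sum_filter, Finset.sum_product]
      apply Finset.sum_congr rfl
      intro k _
      rw [← Finset.sum_filter, Finset.filter_ne']
    rw [hrw]
    apply Finset.sum_involution (fun p _ => (p.2, p.1))
    · intro p hp
      show g p.1 p.2 + g p.2 p.1 = 0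
      rw [hsymm p.2 p.1]
      exact hadd _
    · intro p hp _
      have := (Finset.mem_filter.mp hp).2
      intro h
      exact this (congrArg Prod.fst h)
    · intro p hp
      simp only [Finset.mem_filter, Finset.mem_product] at hp ⊢
      exact ⟨⟨hp.1.2, hp.1.1⟩, fun h => hp.2 h.symm⟩
    · intro p hp
      rfl
  rw [hzero, add_zero]
  apply Finset.sum_congr rfl
  intro k _
  exact hsymm u1 k
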